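/- In any execution of a protocol containing an agent trap, once an inner state of the trap becomes occupied it remains occupied indefinitely: every transition from a configuration in which an inner state i ∈ {1,...,m} of the trap is occupied by at least one agent yields a configuration in which state i is still occupied by at least one agent. -/
import Mathlib


open Classical Finset

/-- An ordered pair of distinct agents (initiator, responder) chosen by the scheduler. -/
abbrev SchedPair (n : ℕ) : Type := {p : Fin n × Fin n // p.1 ≠ p.2}

/-- One interaction step: the scheduler selects the ordered pair `p` of distinct agents
(initiator `p.1.1`, responder `p.1.2`) and they update their states via the
transition function `δ`. -/
def pstep {S : Type} {n : ℕ} (δ : S → S → S × S) (c : Fin n → S) (p : SchedPair n) :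
    Fin n → S := fun a =>
  if a = p.1.1 then (δ (c p.1.1) (c p.1.2)).1
  else if a = p.1.2 then (δ (c p.1.1) (c p.1.2)).2
  else c a

/-- The configuration after the first `t` interactions of the finite schedule `σ`. -/
def configAt {S : Type} {n T : ℕ} (δ : S → S → S × S) (c0 : Fin n → S)
    (σ : Fin T → SchedPair n) (t : ℕ) : Fin n → S :=
  ((List.ofFn σ).take t).foldl (pstep δ) c0

/-- Probability of the event `E` under the uniform random scheduler running for
`T` interactions (interactions are drawn independently and uniformly at random). -/
noncomputable def schedPr {n : ℕ} (T : ℕ) (E : (Fin T → SchedPair n) → Prop) : ℝ :=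
  (((Finset.univ : Finset (Fin T → SchedPair n)).filter fun σ => E σ).card : ℝ) /
    ((Finset.univ : Finset (Fin T → SchedPair n)).card : ℝ)

/-- The infinite trajectory generated by the schedule `σ` from configuration `c0`. -/
def ptraj {S : Type} {n : ℕ} (δ : S → S → S × S) (c0 : Fin n → S)
    (σ : ℕ → SchedPair n) : ℕ → Fin n → S
  | 0 => c0
  | t + 1 => pstep δ (ptraj δ c0 σ t) (σ t)

/-- In any execution of a protocol containing an agent trap
(gate state `trap 0`, inner states `trap i` for `i ≠ 0`, rules
`Rᵢ : i+i → i+(i-1)` and `R_g : 0+0 → m+Y`, and no other rules whose left-hand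
sides involve the trap's states), once an inner state of the trap is occupied it
remains occupied: every single transition from a configuration in which the inner
state `trap i` is occupied yields a configuration in which it is still occupied. -/
theorem trap_inner_state_stays_occupied
    {S : Type} {m N : ℕ} (trap : Fin (m + 1) ↪ S) (Y : S) (δ : S → S → S × S)
    (hY : ∀ i, Y ≠ trap i)
    (hinner : ∀ i : Fin (m + 1), i ≠ 0 → δ (trap i) (trap i) = (trap i, trap (i - 1)))
    (hgate : δ (trap 0) (trap 0) = (trap (Fin.last m), Y))
    (honly : ∀ s t : S, s ≠ t → ((∃ i, s = trap i) ∨ (∃ i, t = trap i)) → δ s t = (s, t))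
    (c : Fin N → S) (p : SchedPair N) (i : Fin (m + 1)) (hi : i ≠ 0)
    (hocc : ∃ a, c a = trap i) :
    ∃ a, pstep δ c p a = trap i := by
  obtain ⟨a, ha⟩ := hocc
  by_cases h1 : a = p.1.1
  · subst h1
    by_cases heq : c p.1.1 = c p.1.2
    · exact ⟨p.1.1, by simp [pstep, ha, ← heq, hinner i hi]⟩
    · exact ⟨p.1.1, by simp only [pstep, if_pos rfl, honly _ _ heq (Or.inl ⟨i, ha⟩)]; exact ha⟩
  · by_cases h2 : a = p.1.2
    · subst h2
      by_cases heq : c p.1.1 = c p.1.2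
      · refine ⟨p.1.1, ?_⟩
        have h11 : c p.1.1 = trap i := heq.trans ha
        simp [pstep, h11, ← heq, hinner i hi]
      · refine ⟨p.1.2, ?_⟩
        simp only [pstep, if_neg h1, if_pos rfl, honly _ _ heq (Or.inr ⟨i, ha⟩)]
        exact ha
    · exact ⟨a, by simp [pstep, h1, h2, ha]⟩
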